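/- Along any solution (x(t), y(t)) of the ODE system dx/dt = (1−x)(μ − x²y²), dy/dt = (1−y)(μ − x²y²) with x(t), y(t) ∈ (0,1) for all t, the ratio (1 − y(t))/(1 − x(t)) is constant in t. -/

import Mathlib

theorem ratio_constant_along_ODE (μ : ℝ) (hμ : 0 < μ) (x y : ℝ → ℝ)
    (hx : Differentiable ℝ x) (hy : Differentiable ℝ y)
    (hxr : ∀ t, x t ∈ Set.Ioo (0:ℝ) 1) (hyr : ∀ t, y t ∈ Set.Ioo (0:ℝ) 1)
    (hx' : ∀ t, deriv x t = (1 - x t) * (μ - (x t)^2 * (y t)^2))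
    (hy' : ∀ t, deriv y t = (1 - y t) * (μ - (x t)^2 * (y t)^2)) :
    ∀ s t : ℝ, (1 - y t) / (1 - x t) = (1 - y s) / (1 - x s) := by
  have key : ∀ t, HasDerivAt (fun t => (1 - y t) / (1 - x t)) 0 t := by
    intro t
    have hx1 : (1 - x t) ≠ 0 := by have := (hxr t).2; intro h; linarith [sub_eq_zero.mp h]
    have hdx : HasDerivAt x ((1 - x t) * (μ - (x t)^2 * (y t)^2)) t := by
      rw [← hx' t]; exact (hx t).hasDerivAt
    have hdy : HasDerivAt y ((1 - y t) * (μ - (x t)^2 * (y t)^2)) t := by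
      rw [← hy' t]; exact (hy t).hasDerivAt
    have h1 : HasDerivAt (fun u => 1 - y u) (0 - (1 - y t) * (μ - (x t)^2 * (y t)^2)) t :=
      (hasDerivAt_const t (1:ℝ)).sub hdy
    have h2 : HasDerivAt (fun u => 1 - x u) (0 - (1 - x t) * (μ - (x t)^2 * (y t)^2)) t :=
      (hasDerivAt_const t (1:ℝ)).sub hdx
    have h := h1.div h2 hx1
    refine h.congr_deriv ?_
    field_simp
    ring
  intro s t
  exact is_const_of_deriv_eq_zero (fun u => (key u).differentiableAt)
    (fun u => (key u).deriv) t s
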